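/- Let G be a group and c ≥ 1. The verbal subgroup of G ≀ ℤ associated to the variety of nilpotent groups of class at most c (i.e. the (c+1)-st term of the lower central series γ_{c+1}(G ≀ ℤ)) equals the base group G^ℤ. -/

import Mathlib

/-- The translation action of `B` on the base group `B → G` of the regular wreath product. -/
def wrAut (G B : Type*) [Group G] [Group B] : B →* MulAut (B → G) where
  toFun b :=
    { toFun := fun f x => f (x * b)
      invFun := fun f x => f (x * b⁻¹)
      left_inv := fun f => by funext x; simp [mul_assoc]
      right_inv := fun f => by funext x; simp [mul_assoc]
      map_mul' := fun f g => rfl }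
  map_one' := by ext f x; simp
  map_mul' := fun a b => by ext f x; simp [mul_assoc]

/-- The regular wreath product `G ≀ B`. -/
abbrev Wr (G B : Type*) [Group G] [Group B] : Type _ :=
  SemidirectProduct (B → G) B (wrAut G B)

/-- The infinite cyclic group, written multiplicatively. -/
abbrev Zm : Type := Multiplicative ℤ

/-- The generator  of the infinite cyclic group. -/
abbrev zGen : Zm := Multiplicative.ofAdd 1
section aux
variable {G : Type*} [Group G]

def gp (f : ℤ → G) : ℕ → G
  | 0 => 1
  | k+1 => (f k)⁻¹ * gp f k

def gm (f : ℤ → G) : ℕ → G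
  | 0 => 1
  | k+1 => f (Int.negSucc k) * gm f k

def gfun (f : ℤ → G) : ℤ → G
  | Int.ofNat k => gp f k
  | Int.negSucc k => gm f (k+1)

lemma gfun_spec (f : ℤ → G) (n : ℤ) : gfun f n * (gfun f (n+1))⁻¹ = f n := by
  cases n with
  | ofNat k =>
      show gp f k * (gp f (k+1))⁻¹ = f k
      simp [gp, mul_assoc]
  | negSucc k =>
      cases k with
      | zero =>
          show gm f 1 * (gp f 0)⁻¹ = f (Int.negSucc 0)
          simp [gm, gp]
      | succ k =>
          show gm f (k+2) * (gm f (k+1))⁻¹ = f (Int.negSucc (k+1))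
          simp [gm, mul_assoc]

open SemidirectProduct
open scoped commutatorElement

lemma key (f : Zm → G) :
    ∃ g' : Zm → G, ⁅(inl g' : Wr G Zm), (inr zGen : Wr G Zm)⁆ = inl f := by
  refine ⟨fun x => gfun (fun n : ℤ => f (Multiplicative.ofAdd n)) x.toAdd, ?_⟩
  rw [commutatorElement_def, mul_assoc, mul_assoc, ← mul_assoc (inr zGen),
    ← map_inv (inl : (Zm → G) →* Wr G Zm), ← map_inv (inr : Zm →* Wr G Zm), ← inl_aut, ← map_mul, inl_inj]
  exact funext fun x => gfun_spec _ x.toAdd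

end aux

open SemidirectProduct in
/-- For c ≥ 1, the verbal subgroup of G wr Z associated with the variety of nilpotent groups
of class at most c, i.e. the (c+1)-st term γ_{c+1} of the lower central series (which is
lowerCentralSeries _ c in Mathlib's 0-indexed convention), equals the base group G^Z. -/
theorem stmt_5 (G : Type*) [Group G] (c : ℕ) (hc : 1 ≤ c) :
    (⊤ : Subgroup (Wr G Zm)).lowerCentralSeries c =
      (inl : (Zm → G) →* Wr G Zm).range := by
  apply le_antisymm
  · calc (⊤ : Subgroup (Wr G Zm)).lowerCentralSeries c ≤ (⊤ : Subgroup (Wr G Zm)).lowerCentralSeries 1 :=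
        Subgroup.lowerCentralSeries_antitone _ hc
      _ = commutator (Wr G Zm) := Subgroup.top_lowerCentralSeries_one
      _ ≤ (rightHom : Wr G Zm →* Zm).ker := Abelianization.commutator_subset_ker _
      _ = inl.range := range_inl_eq_ker_rightHom.symm
  · have lower : ∀ k : ℕ,
        (inl : (Zm → G) →* Wr G Zm).range ≤ (⊤ : Subgroup (Wr G Zm)).lowerCentralSeries (k + 1) := by
      intro k
      induction k with
      | zero =>
          rintro _ ⟨f, rfl⟩
          obtain ⟨g', hg⟩ := key f
          rw [← hg]
          show _ ∈ ⁅(⊤ : Subgroup (Wr G Zm)).lowerCentralSeries 0, (⊤ : Subgroup (Wr G Zm))⁆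
          exact Subgroup.commutator_mem_commutator (Subgroup.mem_top _) (Subgroup.mem_top _)
      | succ k ih =>
          rintro _ ⟨f, rfl⟩
          obtain ⟨g', hg⟩ := key f
          rw [← hg]
          show _ ∈ ⁅(⊤ : Subgroup (Wr G Zm)).lowerCentralSeries (k + 1), (⊤ : Subgroup (Wr G Zm))⁆
          exact Subgroup.commutator_mem_commutator (ih ⟨g', rfl⟩) (Subgroup.mem_top _)
    obtain ⟨k, rfl⟩ := Nat.exists_eq_add_of_le hc
    rw [Nat.add_comm]; exact lower k
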